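/- arXiv:1401.7027 — 5 statements merged into one kernel-verified Lean document; each statement's English description precedes it below -/
import Mathlib

section
/- For integers n ≥ 2 and k ≥ 1, the number β_{n,k} (the positive real with β_{n,k}^{2^k} = γ_n, γ_n the n-th multinacci number) is not a Pisot number. -/
/-- A Pisot number: a real algebraic integer greater than 1 all of whose Galois
conjugates (other complex roots of its minimal polynomial) have modulus < 1. -/
def IsPisot (β : ℝ) : Prop :=
  1 < β ∧ IsIntegral ℤ β ∧
    ∀ z : ℂ, Polynomial.aeval z ((minpoly ℚ β).map (algebraMap ℚ ℂ)) = 0 →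
      z ≠ (β : ℂ) → ‖z‖ < 1

namespace BetaNK

open Polynomial Finset Set

lemma coeff_comp_negX {R : Type*} [CommRing R] (f : R[X]) (i : ℕ) :
    (f.comp (-X)).coeff i = (-1)^i * f.coeff i := by
  induction f using Polynomial.induction_on' with
  | add p q hp hq => simp [add_comp, hp, hq, mul_add]
  | monomial k a =>
      rw [monomial_comp, neg_pow]
      have h1 : ((-1 : R[X])^k) = C ((-1)^k) := by simp
      rw [h1, ← mul_assoc, mul_comm (C a), ← C_mul]
      simp only [coeff_C_mul, coeff_X_pow, coeff_monomial]
      by_cases h : i = k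
      · subst h; simp [mul_comm]
      · simp [h, Ne.symm h]

lemma comp_sum {R : Type*} [CommSemiring R] {ι : Type*} (s : Finset ι) (g : ι → R[X])
    (q : R[X]) : (∑ i ∈ s, g i).comp q = ∑ i ∈ s, (g i).comp q := by
  simp only [Polynomial.comp, eval₂_finset_sum]

/-- even polynomials are `q(X^2)` -/
lemma exists_comp_sq {K : Type*} [Field K] [CharZero K] (f : K[X]) (hf : f.comp (-X) = f) :
    ∃ q : K[X], q.comp (X^2) = f := by
  have hodd : ∀ i, Odd i → f.coeff i = 0 := by
    intro i hi
    have h := coeff_comp_negX f i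
    rw [hf, hi.neg_one_pow, neg_one_mul] at h
    have h2 : (2 : K) * f.coeff i = 0 := by linear_combination h
    simpa [two_ne_zero] using mul_eq_zero.mp h2
  refine ⟨∑ j ∈ range (f.natDegree + 1), C (f.coeff (2*j)) * X^j, ?_⟩
  rw [comp_sum]
  simp only [mul_comp, C_comp, X_pow_comp]
  have hXp : ∀ j : ℕ, ((X : K[X])^2)^j = X^(2*j) := fun j => by rw [← pow_mul]
  simp only [hXp]
  ext i
  rw [finset_sum_coeff]
  simp only [coeff_C_mul, coeff_X_pow]
  rcases Nat.even_or_odd i with he | ho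
  · obtain ⟨j₀, hj₀⟩ := he
    have hj0 : i = 2 * j₀ := by omega
    by_cases hle : j₀ ≤ f.natDegree
    · rw [Finset.sum_eq_single j₀]
      · simp [hj0]
      · intro b _ hb
        have hne : ¬ (i = 2 * b) := by omega
        simp [hne]
      · intro hmem
        exact absurd (Finset.mem_range.mpr (by omega)) hmem
    · have hco : f.coeff i = 0 :=
        coeff_eq_zero_of_natDegree_lt (by omega)
      rw [hco, Finset.sum_eq_zero]
      intro b hb
      have hb' := Finset.mem_range.mp hb
      have hne : ¬ (i = 2 * b) := by omega
      simp [hne]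
  · rw [hodd i ho, Finset.sum_eq_zero]
    intro b _
    have hne : ¬ (i = 2 * b) := by
      rcases ho with ⟨t, ht⟩; omega
    simp [hne]

/-- the auxiliary function t ↦ t^(n+1) - 2 t^n + 1 -/
noncomputable def gfun (n : ℕ) : ℝ → ℝ := fun t => t^(n+1) - 2*t^n + 1

lemma gfun_hasDeriv (n : ℕ) (hn : 1 ≤ n) (t : ℝ) :
    HasDerivAt (gfun n) (t^(n-1) * ((n+1)*t - 2*n)) t := by
  have h1 : HasDerivAt (fun x : ℝ => x^(n+1)) ((n+1) * t^n) t := by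
    simpa using hasDerivAt_pow (n+1) t
  have h2 : HasDerivAt (fun x : ℝ => 2*x^n) (2 * (n * t^(n-1))) t := by
    simpa using (hasDerivAt_pow n t).const_mul 2
  have h3 := (h1.sub h2).add_const 1
  refine h3.congr_deriv ?_
  have ht : t^n = t^(n-1) * t := by
    conv_lhs => rw [show n = (n-1)+1 by omega]
    ring
  rw [ht]; push_cast; ring

lemma gfun_cont (n : ℕ) : Continuous (gfun n) := by
  unfold gfun; continuity

lemma gfun_strictAntiOn (n : ℕ) (hn : 2 ≤ n) :
    StrictAntiOn (gfun n) (Icc 0 (2*n/(n+1) : ℝ)) := by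
  apply strictAntiOn_of_deriv_neg (convex_Icc _ _) (gfun_cont n).continuousOn
  intro t ht
  rw [interior_Icc] at ht
  rw [(gfun_hasDeriv n (by omega) t).deriv]
  have h1 : (0:ℝ) < t := ht.1
  have h2 : t < 2*n/(n+1) := ht.2
  have hn1 : (0:ℝ) < (n:ℝ)+1 := by positivity
  have h3 : ((n:ℝ)+1)*t - 2*n < 0 := by
    rw [lt_div_iff₀ hn1] at h2
    nlinarith
  have h4 : (0:ℝ) < t^(n-1) := by positivity
  nlinarith

lemma gfun_strictMonoOn (n : ℕ) (hn : 2 ≤ n) :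
    StrictMonoOn (gfun n) (Ici (2*n/(n+1) : ℝ)) := by
  apply strictMonoOn_of_deriv_pos (convex_Ici _) (gfun_cont n).continuousOn
  intro t ht
  rw [interior_Ici] at ht
  rw [(gfun_hasDeriv n (by omega) t).deriv]
  have hn1 : (0:ℝ) < (n:ℝ)+1 := by positivity
  have ht0 : (0:ℝ) < 2*n/(n+1) := by positivity
  have h1 : (0:ℝ) < t := lt_trans ht0 ht
  have h3 : ((n:ℝ)+1)*t - 2*n > 0 := by
    rw [Set.mem_Ioi, div_lt_iff₀ hn1] at ht
    nlinarith
  have h4 : (0:ℝ) < t^(n-1) := by positivity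
  nlinarith

lemma gfun_one (n : ℕ) : gfun n 1 = 0 := by simp [gfun]; ring

lemma one_lt_t0 (n : ℕ) (hn : 2 ≤ n) : (1:ℝ) < 2*n/(n+1) := by
  have hn1 : (0:ℝ) < (n:ℝ)+1 := by positivity
  rw [lt_div_iff₀ hn1]
  have : (2:ℝ) ≤ (n:ℝ) := by exact_mod_cast hn
  nlinarith

lemma gfun_root_gt (n : ℕ) (hn : 2 ≤ n) {a : ℝ} (ha : 1 < a) (ha0 : gfun n a = 0) :
    2*n/(n+1) < a := by
  by_contra h
  push_neg at h
  have h1 : (1:ℝ) ∈ Icc (0:ℝ) (2*n/(n+1)) := ⟨by norm_num, (one_lt_t0 n hn).le⟩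
  have h2 : a ∈ Icc (0:ℝ) (2*n/(n+1)) := ⟨by linarith, h⟩
  have := gfun_strictAntiOn n hn h1 h2 ha
  rw [gfun_one, ha0] at this
  exact lt_irrefl 0 this

lemma gfun_root_unique (n : ℕ) (hn : 2 ≤ n) {a b : ℝ} (ha : 1 < a) (hb : 1 < b)
    (ha0 : gfun n a = 0) (hb0 : gfun n b = 0) : a = b := by
  have hag := gfun_root_gt n hn ha ha0
  have hbg := gfun_root_gt n hn hb hb0
  exact (gfun_strictMonoOn n hn).injOn (le_of_lt hag) (le_of_lt hbg) (by rw [ha0, hb0])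

lemma gfun_gamma (n : ℕ) {γ : ℝ} (hγeq : γ ^ n = ∑ i ∈ Finset.range n, γ ^ i) :
    gfun n γ = 0 := by
  have h := geom_sum_mul γ n
  rw [← hγeq] at h
  unfold gfun
  linear_combination h

/-- Any complex root of `z^n = ∑ z^i` other than `γ` has modulus < 1. -/
lemma root_small (n : ℕ) (hn : 2 ≤ n) {γ : ℝ} (hγ : γ ∈ Set.Ioo (1:ℝ) 2)
    (hγeq : γ ^ n = ∑ i ∈ Finset.range n, γ ^ i)
    {z : ℂ} (hz : z ^ n = ∑ i ∈ Finset.range n, z ^ i) (hne : z ≠ (γ:ℂ)) :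
    ‖z‖ < 1 := by
  by_contra hcon
  push_neg at hcon   -- 1 ≤ abs z
  set r := ‖z‖ with hr
  have hr0 : 0 ≤ r := norm_nonneg z
  -- z^(n+1) - 2 z^n + 1 = 0
  have hG : z^(n+1) - 2*z^n + 1 = 0 := by
    have h := geom_sum_mul z n
    rw [← hz] at h
    linear_combination h
  have hzn : z^n * (2 - z) = 1 := by linear_combination -hG
  have habs : r^n * ‖2 - z‖ = 1 := by
    have := congrArg norm hzn
    simpa [norm_mul, norm_pow] using this
  -- (i) : gfun n r ≥ 0
  have hi : 0 ≤ gfun n r := by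
    have htri : 2 - r ≤ ‖2 - z‖ := by
      have h2 : (2:ℝ) = ‖(2 - z) + z‖ := by norm_num
      have := norm_add_le (2 - z) z
      rw [← h2] at this
      linarith
    have : r^n * (2 - r) ≤ r^n * ‖2 - z‖ :=
      mul_le_mul_of_nonneg_left htri (by positivity)
    rw [habs] at this
    unfold gfun
    have hrn : r^(n+1) = r^n * r := by ring
    nlinarith
  -- (ii) : gfun n r ≤ 0
  have hii : gfun n r ≤ 0 := by
    have htri : r^n ≤ ∑ i ∈ Finset.range n, r^i := by
      have h1 : ‖∑ i ∈ Finset.range n, z^i‖ ≤ ∑ i ∈ Finset.range n, ‖z^i‖ :=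
        norm_sum_le _ _
      rw [← hz] at h1
      simpa [norm_pow] using h1
    have h2 : r^n * (r - 1) ≤ (∑ i ∈ Finset.range n, r^i) * (r - 1) :=
      mul_le_mul_of_nonneg_right htri (by linarith)
    rw [geom_sum_mul] at h2
    show r^(n+1) - 2*r^n + 1 ≤ 0
    have hrn : r^(n+1) = r^n * r := by ring
    nlinarith
  have hG0 : gfun n r = 0 := le_antisymm hii hi
  -- gfun n γ = 0
  have hγG : gfun n γ = 0 := gfun_gamma n hγeq
  rcases eq_or_lt_of_le hcon with h1 | h1
  · -- r = 1 : then |2-z| = 1 and z = 1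
    have hr1 : r = 1 := h1.symm
    have habs1 : ‖2 - z‖ = 1 := by
      rw [hr1] at habs; simpa using habs
    have hsq1 : Complex.normSq (2 - z) = 1 := by
      have := congrArg (· ^ 2) habs1
      rw [← Complex.sq_norm, habs1]; norm_num
    have hsq2 : Complex.normSq z = 1 := by
      rw [← Complex.sq_norm, ← hr, hr1]; norm_num
    have hre : z.re = 1 := by
      simp [Complex.normSq_apply, Complex.sub_re, Complex.sub_im] at hsq1 hsq2
      nlinarith
    have him : z.im = 0 := by
      simp [Complex.normSq_apply] at hsq2
      nlinarith
    have hz1 : z = 1 := Complex.ext (by simp [hre]) (by simp [him])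
    rw [hz1] at hz
    simp at hz
    -- hz : 1 = n
    have : (1:ℂ) = (n:ℂ) := by simpa using hz
    have : (1:ℕ) = n := by exact_mod_cast this
    omega
  · -- r > 1 : r = γ, then z = γ
    have hrγ : r = γ := gfun_root_unique n hn h1 hγ.1 hG0 hγG
    have h2r : (0:ℝ) < 2 - r := by rw [hrγ]; linarith [hγ.2]
    have habs2 : ‖2 - z‖ = 2 - r := by
      have hrn : (0:ℝ) < r^n := by positivity
      have hG0' : r^(n+1) - 2*r^n + 1 = 0 := hG0
      have hval : r^n * (2 - r) = 1 := by linear_combination -hG0'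
      have heq : r^n * ‖2 - z‖ = r^n * (2 - r) := by
        rw [habs, hval]
      exact mul_left_cancel₀ (ne_of_gt hrn) heq
    have hsq1 : Complex.normSq (2 - z) = (2 - r)^2 := by
      have := congrArg (· ^ 2) habs2
      rw [← Complex.sq_norm, habs2]
    have hsq2 : Complex.normSq z = r^2 := by
      rw [← Complex.sq_norm, ← hr]
    have hre : z.re = r := by
      simp [Complex.normSq_apply, Complex.sub_re, Complex.sub_im] at hsq1 hsq2
      nlinarith
    have him : z.im = 0 := by
      simp [Complex.normSq_apply] at hsq2
      nlinarith
    exact hne (Complex.ext (by simp [hre, hrγ]) (by simp [him]))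

noncomputable def Mn (n : ℕ) : ℤ[X] := X^n - ∑ i ∈ Finset.range n, X^i

lemma Mn_aeval {R : Type*} [CommRing R] (n : ℕ) (x : R) :
    (aeval x) (Mn n) = x^n - ∑ i ∈ Finset.range n, x^i := by
  simp [Mn]

lemma Mn_sum_degree (n : ℕ) (hn : 1 ≤ n) :
    (∑ i ∈ Finset.range n, (X:ℤ[X])^i).degree < n := by
  apply lt_of_le_of_lt (degree_sum_le _ _)
  rw [Finset.sup_lt_iff (by exact_mod_cast WithBot.bot_lt_coe n)]
  intro i hi
  rw [degree_X_pow]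
  exact_mod_cast Finset.mem_range.mp hi

lemma Mn_monic (n : ℕ) (hn : 1 ≤ n) : (Mn n).Monic :=
  monic_X_pow_sub (Mn_sum_degree n hn)

lemma Mn_degree (n : ℕ) (hn : 1 ≤ n) : (Mn n).degree = n := by
  unfold Mn
  rw [degree_sub_eq_left_of_degree_lt]
  · exact degree_X_pow n
  · rw [degree_X_pow]; exact Mn_sum_degree n hn

lemma Mn_natDegree (n : ℕ) (hn : 1 ≤ n) : (Mn n).natDegree = n :=
  natDegree_eq_of_degree_eq_some (Mn_degree n hn)

lemma Mn_eval_zero (n : ℕ) (hn : 1 ≤ n) : (Mn n).eval 0 = -1 := by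
  unfold Mn
  rw [eval_sub, eval_pow, eval_X, eval_finset_sum]
  rw [Finset.sum_eq_single 0]
  · simp [zero_pow (by omega : n ≠ 0)]
  · intro b _ hb; simp [zero_pow hb]
  · intro h; exact absurd (Finset.mem_range.mpr (by omega)) h

lemma Mn_mul_ident (n : ℕ) : (X - 1) * Mn n = X^(n+1) - 2*X^n + 1 := by
  unfold Mn
  have h := geom_sum_mul (X : ℤ[X]) n
  ring_nf
  ring_nf at h
  linear_combination -h

lemma prod_abs_lt_one (s : Multiset ℝ) (hs : s ≠ 0) (h0 : ∀ x ∈ s, 0 ≤ x)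
    (h1 : ∀ x ∈ s, x < 1) : s.prod < 1 := by
  induction s using Multiset.induction_on with
  | empty => exact absurd rfl hs
  | cons a t ih =>
      rw [Multiset.prod_cons]
      have ha0 : 0 ≤ a := h0 a (Multiset.mem_cons_self a t)
      have ha1 : a < 1 := h1 a (Multiset.mem_cons_self a t)
      by_cases ht : t = 0
      · subst ht; simpa using ha1
      · have htp : t.prod < 1 :=
          ih ht (fun x hx => h0 x (Multiset.mem_cons_of_mem hx))
            (fun x hx => h1 x (Multiset.mem_cons_of_mem hx))
        have htp0 : 0 ≤ t.prod :=
          Multiset.prod_nonneg (fun x hx => h0 x (Multiset.mem_cons_of_mem hx))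
        nlinarith

variable {n : ℕ} {γ : ℝ}

lemma gamma_isIntegral (hn : 2 ≤ n)
    (hγeq : γ ^ n = ∑ i ∈ Finset.range n, γ ^ i) : IsIntegral ℤ γ := by
  refine ⟨Mn n, Mn_monic n (by omega), ?_⟩
  rw [← aeval_def, Mn_aeval, hγeq, sub_self]

lemma Mn_aeval_gamma_zero (hγeq : γ ^ n = ∑ i ∈ Finset.range n, γ ^ i) :
    (aeval γ) (Mn n) = 0 := by
  rw [Mn_aeval, hγeq, sub_self]

lemma minpolyZ_gamma (hn : 2 ≤ n) (hγ : γ ∈ Set.Ioo (1:ℝ) 2)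
    (hγeq : γ ^ n = ∑ i ∈ Finset.range n, γ ^ i) : minpoly ℤ γ = Mn n := by
  have hγint : IsIntegral ℤ γ := gamma_isIntegral hn hγeq
  have hdvd : minpoly ℤ γ ∣ Mn n :=
    minpoly.isIntegrallyClosed_dvd hγint (Mn_aeval_gamma_zero hγeq)
  obtain ⟨c, hc⟩ := hdvd
  set mz := minpoly ℤ γ with hmz
  have hmzM : mz.Monic := minpoly.monic hγint
  have hcM : c.Monic := hmzM.of_mul_monic_left (hc ▸ Mn_monic n (by omega))
  -- claim : c = 1
  have hc1 : c = 1 := by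
    rw [← hcM.natDegree_eq_zero]
    by_contra hcd
    -- work over ℂ
    set φ := algebraMap ℤ ℂ with hφ
    set cC := c.map φ with hcC
    have hcCM : cC.Monic := hcM.map φ
    have hdegC : cC.natDegree = c.natDegree := hcM.natDegree_map φ
    have hcC0 : cC ≠ 0 := hcCM.ne_zero
    -- γ as a complex root of mz
    have hmzγ : (aeval (γ:ℂ)) mz = 0 := by
      have h1 : (aeval γ) mz = 0 := minpoly.aeval ℤ γ
      have h2 := Polynomial.aeval_algebraMap_apply ℂ γ mz
      rw [h1] at h2
      simpa using h2
    -- Mn has simple root at γ : c does not vanish at γ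
    have hMnγC : (aeval (γ:ℂ)) (Mn n) = 0 := by
      rw [Mn_aeval]
      have hcast : ((γ:ℂ))^n = ∑ i ∈ Finset.range n, ((γ:ℂ))^i := by
        have := congrArg (fun t : ℝ => (t : ℂ)) hγeq
        push_cast at this
        exact this
      rw [hcast, sub_self]
    have hnotγ : (aeval (γ:ℂ)) c ≠ 0 := by
      intro h0
      -- derivative of Mn vanishes at γ
      have hder0 : (aeval (γ:ℂ)) (derivative (Mn n)) = 0 := by
        have hc' : derivative (Mn n) = derivative mz * c + mz * derivative c := by
          rw [hc, derivative_mul]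
        rw [hc', map_add, map_mul, map_mul, hmzγ, h0]
        ring
      -- from the identity, (γ-1) * Mn'(γ) = (n+1)γ^n - 2nγ^(n-1)
      have hid := congrArg (fun p : ℤ[X] => (aeval (γ:ℂ)) (derivative p)) (Mn_mul_ident n)
      simp only [derivative_mul, derivative_sub, derivative_add, derivative_X_pow,
        derivative_one, derivative_X, derivative_ofNat, map_add, map_sub, map_mul, map_pow,
        map_one, map_zero, aeval_X, aeval_C, map_ofNat, hder0, hMnγC] at hid
      -- hid should now be an equation in ℂ
      have hzero : ((n:ℂ)+1) * (γ:ℂ)^n - 2*(n:ℂ)*(γ:ℂ)^(n-1) = 0 := by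
        push_cast at hid ⊢
        linear_combination -hid
      have hγt0 : 2*n/(n+1) < γ := gfun_root_gt n hn hγ.1 (gfun_gamma n hγeq)
      have hpos : ((n:ℝ)+1)*γ^n - 2*n*γ^(n-1) > 0 := by
        have h1 : (0:ℝ) < γ^(n-1) := pow_pos (by linarith [hγ.1]) _
        have h2 : ((n:ℝ)+1)*γ - 2*n > 0 := by
          have hd : (0:ℝ) < (n:ℝ)+1 := by positivity
          rw [div_lt_iff₀ hd] at hγt0; nlinarith
        have h3 : γ^n = γ^(n-1)*γ := by
          conv_lhs => rw [show n = (n-1)+1 by omega]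
          rw [pow_succ]
        nlinarith
      have hcast2 : ((n:ℂ)+1) * (γ:ℂ)^n - 2*(n:ℂ)*(γ:ℂ)^(n-1)
          = ((((n:ℝ)+1)*γ^n - 2*n*γ^(n-1) : ℝ) : ℂ) := by push_cast; ring
      rw [hcast2] at hzero
      rw [Complex.ofReal_eq_zero] at hzero
      linarith
    -- all roots of cC have modulus < 1
    have hroots : ∀ z ∈ cC.roots, ‖z‖ < 1 := by
      intro z hz
      have hzr : cC.IsRoot z := isRoot_of_mem_roots hz
      have hMnz : (aeval z) (Mn n) = 0 := by
        have : ((Mn n).map φ).eval z = 0 := by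
          rw [hc, Polynomial.map_mul, eval_mul]
          have : cC.eval z = 0 := hzr
          rw [hcC] at this
          rw [this, mul_zero]
        rwa [eval_map, ← aeval_def] at this
      have hzeq : z ^ n = ∑ i ∈ Finset.range n, z ^ i := by
        rw [Mn_aeval] at hMnz
        exact sub_eq_zero.mp hMnz
      refine root_small n hn hγ hγeq hzeq ?_
      intro hzγ
      apply hnotγ
      rw [← hzγ]
      have : cC.eval z = 0 := hzr
      rw [hcC, eval_map, ← aeval_def] at this
      exact this
    -- product of roots
    have hsplits : cC.Splits := IsAlgClosed.splits cC
    have hcard : cC.roots.card = cC.natDegree := splits_iff_card_roots.mp hsplits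
    have hprod := hsplits.eq_prod_roots_of_monic hcCM
    have habs : ‖cC.eval 0‖ < 1 := by
      have h0 : cC.eval 0 = (cC.roots.map (fun a => -a)).prod := by
        conv_lhs => rw [hprod]
        rw [eval_multiset_prod, Multiset.map_map]
        congr 1
        apply Multiset.map_congr rfl
        intro a _; simp
      rw [h0, show ∀ s : Multiset ℂ, ‖s.prod‖ = (s.map norm).prod from
          fun s => map_multiset_prod (normHom : ℂ →*₀ ℝ) s, Multiset.map_map]
      apply prod_abs_lt_one
      · intro hemp
        have : cC.roots = 0 := by
          simpa [Multiset.map_eq_zero] using hemp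
        rw [this] at hcard
        simp only [Multiset.card_zero] at hcard
        rw [hdegC] at hcard
        exact hcd hcard.symm
      · intro x hx
        obtain ⟨a, _, rfl⟩ := Multiset.mem_map.mp hx
        simp only [Function.comp_apply]
        positivity
      · intro x hx
        obtain ⟨a, ha, rfl⟩ := Multiset.mem_map.mp hx
        simpa using hroots a ha
    -- but |c(0)| = 1
    have hunit : c.eval 0 = 1 ∨ c.eval 0 = -1 := by
      have hdvd1 : c.eval 0 ∣ (-1 : ℤ) := by
        refine ⟨mz.eval 0, ?_⟩
        rw [← Mn_eval_zero n (by omega : 1 ≤ n), hc, eval_mul]; ring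
      exact Int.isUnit_iff.mp (isUnit_of_dvd_unit hdvd1 (IsUnit.neg isUnit_one))
    have hceval : ‖cC.eval 0‖ = 1 := by
      have h0 : cC.eval 0 = φ (c.eval 0) := by
        rw [hcC, eval_map, eval₂_at_zero, coeff_zero_eq_eval_zero]
      rcases hunit with h | h <;> rw [h0, h] <;> simp [hφ]
    rw [hceval] at habs
    exact lt_irrefl 1 habs
  rw [hc1, mul_one] at hc
  exact hc.symm

noncomputable def Spoly (n : ℕ) : ℤ[X] := ∑ i ∈ Finset.range n, X^i
noncomputable def Tpoly (n : ℕ) : ℤ[X] := ∑ i ∈ Finset.range n, C ((1 - (-1:ℤ)^i)/2) * X^i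

lemma comp_sum' {R : Type*} [CommSemiring R] {ι : Type*} (s : Finset ι) (g : ι → R[X])
    (q : R[X]) : (∑ i ∈ s, g i).comp q = ∑ i ∈ s, (g i).comp q := by
  simp only [Polynomial.comp, eval₂_finset_sum]

lemma Spoly_comp (n : ℕ) (q : ℤ[X]) : (Spoly n).comp q = ∑ i ∈ Finset.range n, q^i := by
  rw [Spoly, comp_sum']
  simp [X_pow_comp]

lemma X2_sub_one_ne : ((X:ℤ[X])^2 - 1) ≠ 0 := by
  intro h
  have := congrArg (eval 2) h
  simp at this

lemma F1 (n : ℕ) (hodd : Odd n) :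
    Spoly n * (Spoly n).comp (-X) = (Spoly n).comp (X^2) := by
  apply mul_right_cancel₀ X2_sub_one_ne
  have hA1 : Spoly n * ((X:ℤ[X]) - 1) = X^n - 1 := geom_sum_mul X n
  have hA2 : (Spoly n).comp (-X) * ((-X:ℤ[X]) - 1) = (-X)^n - 1 := by
    rw [Spoly_comp]; exact geom_sum_mul (-X) n
  have hA2' : (Spoly n).comp (-X) * ((X:ℤ[X]) + 1) = X^n + 1 := by
    rw [hodd.neg_pow] at hA2
    linear_combination -hA2
  have hA3 : (Spoly n).comp (X^2) * ((X:ℤ[X])^2 - 1) = X^(2*n) - 1 := by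
    rw [Spoly_comp]
    have := geom_sum_mul ((X:ℤ[X])^2) n
    rw [← pow_mul] at this
    exact this
  calc Spoly n * (Spoly n).comp (-X) * ((X:ℤ[X])^2 - 1)
      = (Spoly n * (X - 1)) * ((Spoly n).comp (-X) * (X + 1)) := by ring
    _ = (X^n - 1) * (X^n + 1) := by rw [hA1, hA2']
    _ = X^(2*n) - 1 := by ring
    _ = (Spoly n).comp (X^2) * ((X:ℤ[X])^2 - 1) := hA3.symm

lemma F2 (n : ℕ) : Spoly n - (Spoly n).comp (-X) = 2 * Tpoly n := by
  rw [Spoly_comp, Spoly, Tpoly, Finset.mul_sum, ← Finset.sum_sub_distrib]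
  apply Finset.sum_congr rfl
  intro i _
  rcases Nat.even_or_odd i with he | ho
  · rw [he.neg_pow, he.neg_one_pow]
    norm_num
  · rw [ho.neg_pow, ho.neg_one_pow]
    have : ((1:ℤ) - (-1))/2 = 1 := by norm_num
    rw [this]
    simp [C_1]
    ring

lemma Tpoly_coeff_one (n : ℕ) (hn : 2 ≤ n) : (Tpoly n).coeff 1 = 1 := by
  rw [Tpoly, finset_sum_coeff]
  rw [Finset.sum_eq_single 1]
  · simp
  · intro b _ hb
    simp [coeff_C_mul, coeff_X_pow, hb, Ne.symm hb]
  · intro h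
    exact absurd (Finset.mem_range.mpr (by omega)) h

lemma Mn_comp_negX (n : ℕ) (hodd : Odd n) :
    (Mn n).comp (-X) = -X^n - (Spoly n).comp (-X) := by
  rw [Mn, ← Spoly, sub_comp, X_pow_comp, hodd.neg_pow]

lemma I1 (n : ℕ) (hodd : Odd n) :
    Mn n * (Mn n).comp (-X) + (Mn n).comp (X^2) = 2 * (X^n * Tpoly n) := by
  have hMc2 : (Mn n).comp (X^2) = (X^2)^n - (Spoly n).comp (X^2) := by
    rw [Mn, ← Spoly, sub_comp, X_pow_comp]
  have hMn : Mn n = X^n - Spoly n := by rw [Mn, ← Spoly]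
  rw [Mn_comp_negX n hodd, hMc2, hMn]
  linear_combination (X:ℤ[X])^n * F2 n + F1 n hodd

lemma aeval_cast_real (x : ℝ) (f : ℚ[X]) :
    (aeval (x:ℂ)) (f.map (algebraMap ℚ ℂ)) = (((aeval x) f : ℝ) : ℂ) := by
  rw [aeval_map_algebraMap]
  have := Polynomial.aeval_algebraMap_apply ℂ x f
  simpa using this

lemma isPisot_sq {β : ℝ} (h : IsPisot β) : IsPisot (β^2) := by
  obtain ⟨hβ1, hint, hconj⟩ := h
  refine ⟨by nlinarith, hint.pow 2, ?_⟩
  intro w hw hwne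
  set m := minpoly ℚ β with hm
  have heven : (m * m.comp (-X)).comp (-X) = m * m.comp (-X) := by
    rw [mul_comp, comp_neg_X_comp_neg_X, mul_comm]
  obtain ⟨q, hq⟩ := exists_comp_sq _ heven
  have hq0 : (aeval (β^2 : ℝ)) q = 0 := by
    have h1 := congrArg (aeval (β:ℝ)) hq
    rw [aeval_comp] at h1
    have hX2 : (aeval (β:ℝ)) ((X:ℚ[X])^2) = β^2 := by simp
    rw [hX2] at h1
    rw [map_mul, minpoly.aeval, zero_mul] at h1
    exact h1
  obtain ⟨u, hu⟩ := minpoly.dvd ℚ (β^2 : ℝ) hq0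
  have hwq : (aeval w) q = 0 := by
    rw [aeval_map_algebraMap] at hw
    rw [hu, map_mul, hw, zero_mul]
  obtain ⟨z, hz⟩ := IsAlgClosed.exists_pow_nat_eq w (n := 2) (by norm_num)
  have hzf : (aeval z) (m * m.comp (-X)) = 0 := by
    rw [← hq, aeval_comp]
    have hX2 : (aeval z) ((X:ℚ[X])^2) = w := by simp [hz]
    rw [hX2, hwq]
  rw [map_mul] at hzf
  have hcast : ((β^2 : ℝ) : ℂ) = ((β:ℝ):ℂ)^2 := by push_cast; ring
  rcases mul_eq_zero.mp hzf with h1 | h1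
  · by_cases hzβ : z = ((β:ℝ):ℂ)
    · exfalso; apply hwne; rw [← hz, hzβ, hcast]
    · have hlt := hconj z (by rwa [aeval_map_algebraMap]) hzβ
      have : ‖w‖ = ‖z‖^2 := by rw [← hz, norm_pow]
      rw [this]
      exact pow_lt_one₀ (norm_nonneg z) hlt (by norm_num)
  · rw [aeval_comp] at h1
    have hXn : (aeval z) (-(X:ℚ[X])) = -z := by simp
    rw [hXn] at h1
    by_cases hzβ : -z = ((β:ℝ):ℂ)
    · exfalso; apply hwne
      rw [← hz, hcast, ← hzβ]; ring
    · have hlt := hconj (-z) (by rwa [aeval_map_algebraMap]) hzβ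
      have : ‖w‖ = ‖-z‖^2 := by
        rw [← hz, norm_pow, norm_neg]
      rw [this]
      exact pow_lt_one₀ (norm_nonneg _) hlt (by norm_num)

/-- extraction of factor 2 from a polynomial vanishing mod 2 -/
lemma exists_half (f : ℤ[X]) (h : f.map (Int.castRingHom (ZMod 2)) = 0) :
    ∃ r : ℤ[X], f = 2 * r := by
  have hdvd : ∀ i, (2:ℤ) ∣ f.coeff i := by
    intro i
    have := congrArg (fun p => Polynomial.coeff p i) h
    simp only [coeff_map, coeff_zero] at this
    exact (ZMod.intCast_zmod_eq_zero_iff_dvd _ 2).mp this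
  obtain ⟨r, hr⟩ := (C_dvd_iff_dvd_coeff 2 f).mpr hdvd
  exact ⟨r, by rw [hr, map_ofNat]⟩

lemma map2_comp_negX (f : ℤ[X]) :
    (f.comp (-X)).map (Int.castRingHom (ZMod 2)) = f.map (Int.castRingHom (ZMod 2)) := by
  rw [Polynomial.map_comp]
  simp only [Polynomial.map_neg, map_X]
  rw [CharTwo.neg_eq, comp_X]

theorem key_contradiction (n : ℕ) (hn : 2 ≤ n) {γ δ : ℝ} (hγ : γ ∈ Set.Ioo (1:ℝ) 2)
    (hγeq : γ ^ n = ∑ i ∈ Finset.range n, γ ^ i) (hδ2 : δ^2 = γ) (hP : IsPisot δ) :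
    False := by
  obtain ⟨hδ1, hδint, hconj⟩ := hP
  have hδQ : IsIntegral ℚ δ := hδint.tower_top
  set m := minpoly ℚ δ with hm
  set p : ℚ[X] := (Mn n).map (algebraMap ℤ ℚ) with hp
  have hγint : IsIntegral ℤ γ := gamma_isIntegral hn hγeq
  have hpmin : minpoly ℚ γ = p := by
    rw [minpoly.isIntegrallyClosed_eq_field_fractions' ℚ hγint, minpolyZ_gamma hn hγ hγeq]
  by_cases hneg : (aeval (-δ:ℝ)) m = 0
  · -- -δ is a conjugate of δ with modulus > 1
    have habs : ‖(((-δ:ℝ)):ℂ)‖ = δ := by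
      rw [Complex.norm_real, Real.norm_eq_abs, abs_neg, abs_of_pos (by linarith)]
    have hne : (((-δ:ℝ)):ℂ) ≠ ((δ:ℝ):ℂ) := by
      intro hEq
      rw [Complex.ofReal_inj] at hEq
      linarith
    have hlt := hconj (((-δ:ℝ)):ℂ) (by rw [aeval_cast_real, hneg]; simp) hne
    rw [habs] at hlt
    linarith
  · -- main case
    have hδγ : (aeval δ) (p.comp (X^2)) = 0 := by
      rw [aeval_comp]
      have hX2 : (aeval δ) ((X:ℚ[X])^2) = γ := by simp [hδ2]
      rw [hX2, ← hpmin]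
      exact minpoly.aeval ℚ γ
    have hmdvd : m ∣ p.comp (X^2) := minpoly.dvd ℚ δ hδγ
    -- the even polynomial q
    have heven : (m * m.comp (-X)).comp (-X) = m * m.comp (-X) := by
      rw [mul_comp, comp_neg_X_comp_neg_X, mul_comm]
    obtain ⟨q, hq⟩ := exists_comp_sq _ heven
    have hm0 : m ≠ 0 := minpoly.ne_zero hδQ
    have hmc0 : m.comp (-X) ≠ 0 := by
      intro h
      apply hm0
      rw [← comp_neg_X_comp_neg_X (p := m), h, zero_comp]
    have hq0 : q ≠ 0 := by
      intro h
      rw [h, zero_comp] at hq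
      exact (mul_ne_zero hm0 hmc0) hq.symm
    have hqγ : (aeval γ) q = 0 := by
      have h1 := congrArg (aeval δ) hq
      rw [aeval_comp] at h1
      have hX2 : (aeval δ) ((X:ℚ[X])^2) = γ := by simp [hδ2]
      rw [hX2, map_mul, minpoly.aeval, zero_mul] at h1
      exact h1
    have hpq : p ∣ q := by
      rw [← hpmin]
      exact minpoly.dvd ℚ γ hqγ
    -- degrees
    set d := m.natDegree with hd
    have hdm : (m.comp (-X)).natDegree = d := by
      rw [natDegree_comp]
      simp [hd]
    have hpmonic : p.Monic := (Mn_monic n (by omega)).map _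
    have hpdeg : p.natDegree = n := by
      rw [hp, (Mn_monic n (by omega)).natDegree_map, Mn_natDegree n (by omega)]
    have hqdeg : q.natDegree = d := by
      have h1 := congrArg natDegree hq
      rw [natDegree_comp, natDegree_X_pow, natDegree_mul hm0 hmc0, hdm] at h1
      omega
    have hnd : n ≤ d := by
      have := natDegree_le_of_dvd hpq hq0
      rw [hpdeg, hqdeg] at this
      exact this
    obtain ⟨c, hc⟩ := hmdvd
    have hpX2monic : (p.comp (X^2)).Monic :=
      hpmonic.comp (monic_X_pow 2) (by rw [natDegree_X_pow]; omega)
    have hc0 : c ≠ 0 := by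
      intro h
      rw [h, mul_zero] at hc
      exact hpX2monic.ne_zero hc
    have hmmonic : m.Monic := minpoly.monic hδQ
    have hcmonic : c.Monic := hmmonic.of_mul_monic_left (hc ▸ hpX2monic)
    have hcdeg : c.natDegree = 2*n - d := by
      have h1 := congrArg natDegree hc
      rw [natDegree_comp, natDegree_X_pow, natDegree_mul hm0 hc0, hpdeg] at h1
      omega
    -- c(-δ) = 0
    have hcneg : (aeval (-δ:ℝ)) c = 0 := by
      have h1 : (aeval (-δ:ℝ)) (p.comp (X^2)) = 0 := by
        rw [aeval_comp]
        have hX2 : (aeval (-δ:ℝ)) ((X:ℚ[X])^2) = γ := by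
          rw [map_pow, aeval_X, neg_sq, hδ2]
        rw [hX2, ← hpmin]
        exact minpoly.aeval ℚ γ
      rw [hc, map_mul] at h1
      rcases mul_eq_zero.mp h1 with h | h
      · exact absurd h hneg
      · exact h
    have hδnegQ : IsIntegral ℚ (-δ:ℝ) := hδQ.neg
    have hm2dvd : minpoly ℚ (-δ:ℝ) ∣ c := minpoly.dvd ℚ (-δ:ℝ) hcneg
    have hm2eq : minpoly ℚ (-δ:ℝ) = (-1)^d * m.comp (-X) := by
      have := minpoly.neg (A := ℚ) δ
      rw [← hm] at this
      exact this
    have hm2deg : (minpoly ℚ (-δ:ℝ)).natDegree = d := by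
      rw [hm2eq]
      have hC : ((-1 : ℚ[X])^d) = C ((-1:ℚ)^d) := by simp
      rw [hC, natDegree_C_mul (by simp [pow_ne_zero] : ((-1:ℚ)^d) ≠ 0), hdm]
    have hdn : d = n := by
      have h1 := natDegree_le_of_dvd hm2dvd hc0
      rw [hm2deg, hcdeg] at h1
      omega
    -- c = minpoly ℚ (-δ)
    have hm2monic : (minpoly ℚ (-δ:ℝ)).Monic := minpoly.monic hδnegQ
    have hceq : c = minpoly ℚ (-δ:ℝ) := by
      obtain ⟨u, hu⟩ := hm2dvd
      have hu0 : u ≠ 0 := by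
        intro h; rw [h, mul_zero] at hu; exact hc0 hu
      have humonic : u.Monic := hm2monic.of_mul_monic_left (hu ▸ hcmonic)
      have hudeg : u.natDegree = 0 := by
        have h1 := congrArg natDegree hu
        rw [natDegree_mul hm2monic.ne_zero hu0, hm2deg, hcdeg, hdn] at h1
        omega
      have : u = 1 := humonic.natDegree_eq_zero.mp hudeg
      rw [hu, this, mul_one]
    -- final identity over ℚ
    have hfinalQ : p.comp (X^2) = m * ((-1)^n * m.comp (-X)) := by
      rw [hc, hceq, hm2eq, hdn]
    -- descend to ℤ
    set mz := minpoly ℤ δ with hmzdef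
    have hmzQ : m = mz.map (algebraMap ℤ ℚ) :=
      minpoly.isIntegrallyClosed_eq_field_fractions' ℚ hδint
    have hinj : Function.Injective (algebraMap ℤ ℚ) := fun a b h => by exact_mod_cast h
    have hfinalZ : (Mn n).comp (X^2) = (-1)^n * (mz * mz.comp (-X)) := by
      apply Polynomial.map_injective _ hinj
      simp only [Polynomial.map_comp, Polynomial.map_mul, Polynomial.map_pow,
        Polynomial.map_neg, Polynomial.map_one, Polynomial.map_X]
      rw [← hmzQ, ← hp, hfinalQ]
      ring
    -- parity
    rcases Nat.even_or_odd n with heven2 | hodd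
    · -- n even : -1 = square
      have hsign : ((-1 : ℤ[X]))^n = 1 := heven2.neg_one_pow
      rw [hsign, one_mul] at hfinalZ
      have h0 := congrArg (eval 0) hfinalZ
      rw [eval_comp, eval_pow, eval_X, eval_mul, eval_comp, eval_neg, eval_X, neg_zero] at h0
      have hz : (0:ℤ)^2 = 0 := by norm_num
      rw [hz, Mn_eval_zero n (by omega)] at h0
      nlinarith [sq_nonneg (mz.eval 0), h0]
    · -- n odd : mod 2 contradiction
      have hsign : ((-1 : ℤ[X]))^n = -1 := hodd.neg_one_pow
      rw [hsign] at hfinalZ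
      have hmain : mz * mz.comp (-X) = Mn n * (Mn n).comp (-X) - 2 * (X^n * Tpoly n) := by
        linear_combination hfinalZ - I1 n hodd
      -- mod 2 : mz ≡ Mn n
      have hmap := congrArg (Polynomial.map (Int.castRingHom (ZMod 2))) hmain
      rw [Polynomial.map_mul, Polynomial.map_sub, Polynomial.map_mul, Polynomial.map_mul,
        map2_comp_negX, map2_comp_negX] at hmap
      have h2poly : (2 : (ZMod 2)[X]) = 0 := by
        rw [show (2:(ZMod 2)[X]) = C 2 from (map_ofNat C 2).symm,
          show (2:ZMod 2) = 0 by decide, C_0]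
      have h2z : ((2:ℤ[X]).map (Int.castRingHom (ZMod 2))) = 0 := by
        rw [Polynomial.map_ofNat, h2poly]
      rw [Polynomial.map_mul] at hmap
      rw [h2z, zero_mul, sub_zero] at hmap
      -- hmap : (mz.map (Int.castRingHom (ZMod 2)))^2-ish
      have hmzMn : mz.map (Int.castRingHom (ZMod 2)) = (Mn n).map (Int.castRingHom (ZMod 2)) := by
        have hsq : (mz.map (Int.castRingHom (ZMod 2)) + (Mn n).map (Int.castRingHom (ZMod 2)))^2 = 0 := by
          rw [CharTwo.add_sq]
          rw [← sq, ← sq] at hmap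
          rw [hmap, ← two_mul, h2poly, zero_mul]
        have hzero : mz.map (Int.castRingHom (ZMod 2)) + (Mn n).map (Int.castRingHom (ZMod 2)) = 0 := by
          exact pow_eq_zero_iff (by norm_num) |>.mp hsq
        have := CharTwo.neg_eq ((Mn n).map (Int.castRingHom (ZMod 2)))
        linear_combination hzero + this
      obtain ⟨r, hr⟩ := exists_half (mz - Mn n) (by
        rw [Polynomial.map_sub, hmzMn, sub_self])
      have hrmz : mz = Mn n + 2*r := by linear_combination hr
      -- substitute
      have h2comp : ((2:ℤ[X])).comp (-X) = 2 := by
        rw [show (2:ℤ[X]) = C 2 from (map_ofNat C 2).symm, C_comp]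
      have hcompr : mz.comp (-X) = (Mn n).comp (-X) + 2 * (r.comp (-X)) := by
        rw [hrmz, add_comp, mul_comp, h2comp]
      have hE : Mn n * (r.comp (-X)) + r * ((Mn n).comp (-X)) + 2*(r * r.comp (-X))
          + X^n * Tpoly n = 0 := by
        have h2E : (2:ℤ[X]) * (Mn n * (r.comp (-X)) + r * ((Mn n).comp (-X))
            + 2*(r * r.comp (-X)) + X^n * Tpoly n) = 0 := by
          have hm' := hmain
          rw [hcompr, hrmz] at hm'
          linear_combination hm'
        rcases mul_eq_zero.mp h2E with h | h
        · exfalso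
          have : ((2:ℤ[X])) ≠ 0 := by
            intro hh
            have := congrArg (eval 0) hh
            simp at this
          exact this h
        · exact h
      -- map hE mod 2
      have hEmap := congrArg (Polynomial.map (Int.castRingHom (ZMod 2))) hE
      simp only [Polynomial.map_add, Polynomial.map_mul, Polynomial.map_pow,
        Polynomial.map_zero, Polynomial.map_X, map2_comp_negX, h2z, zero_mul] at hEmap
      have hXT : (X:(ZMod 2)[X])^n * ((Tpoly n).map (Int.castRingHom (ZMod 2))) = 0 := by
        linear_combination hEmap - ((Mn n).map (Int.castRingHom (ZMod 2))) * (r.map (Int.castRingHom (ZMod 2))) * h2poly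
      have hco := congrArg (fun pp => Polynomial.coeff pp (1 + n)) hXT
      simp only [coeff_X_pow_mul, coeff_zero] at hco
      rw [coeff_map, Tpoly_coeff_one n hn] at hco
      simp only [map_one] at hco
      exact one_ne_zero hco
  -- end

lemma isPisot_pow_two_pow {β : ℝ} (h : IsPisot β) : ∀ j : ℕ, IsPisot (β ^ 2^j)
  | 0 => by simpa using h
  | (j+1) => by
      have h2 := isPisot_sq (isPisot_pow_two_pow h j)
      rwa [← pow_mul, ← pow_succ] at h2

end BetaNK

theorem beta_nk_not_pisot (n k : ℕ) (hn : 2 ≤ n) (hk : 1 ≤ k) (γ β : ℝ)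
    (hγ : γ ∈ Set.Ioo (1:ℝ) 2) (hγeq : γ ^ n = ∑ i ∈ Finset.range n, γ ^ i)
    (hβ : 0 < β) (hβγ : β ^ 2 ^ k = γ) : ¬ IsPisot β := by
  intro hP
  have hδP := BetaNK.isPisot_pow_two_pow hP (k-1)
  have hδ2 : (β ^ 2^(k-1))^2 = γ := by
    rw [← pow_mul, ← pow_succ, show k - 1 + 1 = k by omega]
    exact hβγ
  exact BetaNK.key_contradiction n hn hγ hγeq hδ2 hδP
end

section
/- Let n ≥ 2, k ≥ 0 be integers and let ξ_{n,k,m}⁻, ξ_{n,k,m}⁺ ∈ {0,1} denote the m-th letters of the complementary periodic words ξ⁻_{n,k} and ξ⁺_{n,k} = *(ξ⁻_{n,k}) of period (n+1)2^k. Then for real x > 1, Σ_{m=1}^∞ (ξ_{n,k,m}⁻ − ξ_{n,k,m}⁺) x^{−m} = [x^{2^k}(x^{n·2^k} − x^{(n−1)2^k} − ... − x^{2^k} − 1)/(x^{(n+1)2^k} − 1)] · Σ_{m=1}^{2^k} (ξ_{n,k,m}⁻ − ξ_{n,k,m}⁺) x^{−m}. -/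
/-- The prefix `ξ⁻_{n,k}|_{2^k}`. -/
def xiPrefix : ℕ → List Bool
  | 0 => [false]
  | k + 1 => xiPrefix k ++ (xiPrefix k).map not

/-- The period block of `ξ⁻_{n,k}`: the prefix followed by `n` copies of its
bitwise complement; its length is `(n+1) * 2^k`. -/
def xiBlock (n k : ℕ) : List Bool :=
  xiPrefix k ++ (List.replicate n ((xiPrefix k).map not)).flatten

/-- The `m`-th letter (0-indexed) of the periodic infinite word `ξ⁻_{n,k}`. -/
def xiLetterNeg (n k m : ℕ) : Bool :=
  (xiBlock n k).getD (m % ((n + 1) * 2 ^ k)) false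

lemma xiPrefix_length (k : ℕ) : (xiPrefix k).length = 2 ^ k := by
  induction k with
  | zero => rfl
  | succ k ih => simp only [xiPrefix, List.length_append, List.length_map, ih]; ring

lemma flatten_replicate_getD (l : List Bool) (s : ℕ) (hs : s < l.length) :
    ∀ n i, i < n → ((List.replicate n l).flatten).getD (i * l.length + s) false = l.getD s false := by
  intro n
  induction n with
  | zero => intro i h; omega
  | succ n ih =>
    intro i hi
    rw [List.replicate_succ, List.flatten_cons]
    cases i with
    | zero => simpa using List.getD_append l _ false s hs
    | succ i =>
      have h1 : l.length ≤ (i + 1) * l.length + s := by nlinarith [Nat.le_add_right (i*l.length) s]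
      rw [List.getD_append_right l _ false _ h1]
      have h2 : (i + 1) * l.length + s - l.length = i * l.length + s := by
        have : (i+1)*l.length = i*l.length + l.length := by ring
        omega
      rw [h2]
      exact ih i (by omega)

lemma sum_range_mul {M : Type*} [AddCommMonoid M] (f : ℕ → M) (a b : ℕ) :
    ∑ r ∈ Finset.range (a * b), f r = ∑ i ∈ Finset.range a, ∑ s ∈ Finset.range b, f (i * b + s) := by
  induction a with
  | zero => simp
  | succ a ih =>
    have : (a + 1) * b = a * b + b := by ring
    rw [this, Finset.sum_range_add, ih, Finset.sum_range_succ]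

theorem xi_series_factorisation (n k : ℕ) (hn : 2 ≤ n) (x : ℝ) (hx : 1 < x) :
    (∑' m : ℕ, (if xiLetterNeg n k m then (1:ℝ) else -1) / x ^ (m + 1)) =
      x ^ 2 ^ k * (x ^ (2 ^ k * n) - ∑ j ∈ Finset.range n, x ^ (2 ^ k * j)) /
          (x ^ ((n + 1) * 2 ^ k) - 1) *
        ∑ m ∈ Finset.range (2 ^ k), (if xiLetterNeg n k m then (1:ℝ) else -1) / x ^ (m + 1) := by
  have hx0 : (0:ℝ) < x := by linarith
  set P := 2 ^ k with hP
  set L := (n + 1) * P with hL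
  have hPpos : 0 < P := Nat.pow_pos (by norm_num)
  have hLpos : 0 < L := by positivity
  haveI : NeZero L := ⟨hLpos.ne'⟩
  set F : ℕ → ℝ := fun m => (if xiLetterNeg n k m then (1:ℝ) else -1) / x ^ (m + 1) with hF
  -- step 1: periodic letter
  have hper : ∀ q r : ℕ, r < L → xiLetterNeg n k (q * L + r) = xiLetterNeg n k r := by
    intro q r hr
    unfold xiLetterNeg
    rw [show (n+1) * 2^k = L from rfl, Nat.mul_add_mod', Nat.mod_eq_of_lt hr]
  -- geometric parameter
  have hxL : (0:ℝ) < x ^ L := by positivity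
  have hxL1 : (1:ℝ) < x ^ L := one_lt_pow₀ hx hLpos.ne'
  have hinv_lt : (x ^ L)⁻¹ < 1 := inv_lt_one_of_one_lt₀ hxL1
  have hinv_nonneg : (0:ℝ) ≤ (x ^ L)⁻¹ := by positivity
  -- step 2: tsum via equiv
  have key : (∑' m : ℕ, F m)
      = (1 - (x ^ L)⁻¹)⁻¹ * ∑ r ∈ Finset.range L, F r := by
    have e1 : (∑' p : ℕ × Fin L, F ((Nat.divModEquiv L).symm p)) = ∑' m : ℕ, F m :=
      (Nat.divModEquiv L).symm.tsum_eq F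
    rw [← e1]
    have e2 : ∀ p : ℕ × Fin L, F ((Nat.divModEquiv L).symm p)
        = ((x ^ L)⁻¹) ^ p.1 * (F p.2) := by
      rintro ⟨q, r⟩
      show F (q * L + r.val) = _
      simp only [hF]
      rw [hper q r.val r.isLt]
      rw [show q * L + r.val + 1 = L * q + (r.val + 1) by ring, pow_add, pow_mul]
      rw [inv_pow]; ring
    rw [tsum_congr e2]
    have hsum1 : Summable fun q : ℕ => ‖((x ^ L)⁻¹) ^ q‖ := by
      simp only [norm_pow, norm_inv, Real.norm_eq_abs, abs_of_pos hx0]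
      exact summable_geometric_of_lt_one hinv_nonneg hinv_lt
    have hsum2 : Summable fun r : Fin L => ‖F r.val‖ := .of_finite
    rw [← tsum_mul_tsum_of_summable_norm hsum1 hsum2,
      tsum_geometric_of_lt_one hinv_nonneg hinv_lt, tsum_fintype]
    congr 1
    exact Fin.sum_univ_eq_sum_range (fun r => F r) L
  rw [key]
  -- step 3: letters within first period
  have hlen : (xiPrefix k).length = P := xiPrefix_length k
  have hlet_lo : ∀ m, m < P → xiLetterNeg n k m = (xiPrefix k).getD m false := by
    intro m hm
    unfold xiLetterNeg
    rw [show (n+1) * 2^k = L from rfl, Nat.mod_eq_of_lt (lt_of_lt_of_le hm (Nat.le_mul_of_pos_left P (by omega)))]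
    unfold xiBlock
    exact List.getD_append _ _ _ _ (by rw [hlen]; exact hm)
  have hlet_hi : ∀ i s, i < n → s < P →
      xiLetterNeg n k (P + (i * P + s)) = !((xiPrefix k).getD s false) := by
    intro i s hi hs
    unfold xiLetterNeg
    have hlt : P + (i * P + s) < L := by
      have : i * P + P ≤ n * P := by nlinarith
      calc P + (i * P + s) < P + (i*P + P) := by omega
        _ ≤ P + n * P := by omega
        _ = L := by rw [hL]; ring
    rw [show (n+1) * 2^k = L from rfl, Nat.mod_eq_of_lt hlt]
    unfold xiBlock
    rw [List.getD_append_right _ _ _ _ (by rw [hlen]; omega), hlen,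
      show P + (i*P+s) - P = i*P+s from by omega]
    have hmaplen : ((xiPrefix k).map not).length = P := by rw [List.length_map, hlen]
    rw [← hmaplen] at hs ⊢
    rw [flatten_replicate_getD _ s hs n i hi]
    rw [List.getD_eq_getElem _ _ hs, List.getElem_map,
      List.getD_eq_getElem _ _ (by rw [List.length_map] at hs; exact hs)]
  -- step 4: period sum decomposition
  set SP : ℝ := ∑ m ∈ Finset.range P, (if xiLetterNeg n k m then (1:ℝ) else -1) / x ^ (m + 1) with hSP
  have hxP1 : (1:ℝ) < x ^ P := one_lt_pow₀ hx hPpos.ne'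
  have hxPpos : (0:ℝ) < x ^ P := by positivity
  have hTL : ∑ r ∈ Finset.range L, F r
      = SP - (∑ i ∈ Finset.range n, ((x ^ P)⁻¹) ^ (i+1)) * SP := by
    have hsplit : L = P + n * P := by rw [hL]; ring
    rw [hsplit, Finset.sum_range_add, sum_range_mul (fun j => F (P + j)) n P]
    have : ∀ i ∈ Finset.range n, ∑ s ∈ Finset.range P, F (P + (i * P + s))
        = -(((x ^ P)⁻¹) ^ (i+1) * SP) := by
      intro i hi
      rw [Finset.mem_range] at hi
      rw [hSP, Finset.mul_sum, ← Finset.sum_neg_distrib]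
      apply Finset.sum_congr rfl
      intro s hs
      rw [Finset.mem_range] at hs
      simp only [hF]
      rw [hlet_hi i s hi hs, hlet_lo s hs]
      have hb : ∀ b : Bool, (if (!b) then (1:ℝ) else -1) = -(if b then (1:ℝ) else -1) := by
        intro b; cases b <;> simp
      rw [hb]
      rw [show P + (i * P + s) + 1 = P * (i+1) + (s + 1) by ring, pow_add, pow_mul]
      rw [inv_pow]
      field_simp
    rw [Finset.sum_congr rfl this, Finset.sum_neg_distrib, ← Finset.sum_mul]
    have : ∑ m ∈ Finset.range P, F m = SP := rfl
    rw [this]; ring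
  rw [hTL]
  -- step 5: algebra
  set A : ℝ := ∑ j ∈ Finset.range n, x ^ (P * j) with hA
  have hgeom : (∑ i ∈ Finset.range n, ((x ^ P)⁻¹) ^ (i+1)) = A / (x ^ P) ^ n := by
    rw [hA, eq_div_iff (by positivity), Finset.sum_mul]
    rw [← Finset.sum_range_reflect (fun j => x ^ (P * j)) n]
    apply Finset.sum_congr rfl
    intro i hi
    rw [Finset.mem_range] at hi
    rw [inv_pow, mul_comm,
      ← pow_sub₀ (x ^ P) (by positivity) (by omega : i + 1 ≤ n), ← pow_mul]
    congr 1
    congr 1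
    omega
  rw [hgeom]
  have hxLP : x ^ L = (x ^ P) ^ (n + 1) := by rw [hL, mul_comm, pow_mul]
  have hxPn : x ^ (P * n) = (x ^ P) ^ n := by rw [pow_mul]
  rw [hxLP, hxPn]
  set z : ℝ := x ^ P with hz
  have hz1 : (1:ℝ) < z := hxP1
  have hz0 : z ≠ 0 := by positivity
  have hzn : z ^ (n+1) ≠ 0 := by positivity
  have hzn1 : z ^ (n+1) - 1 ≠ 0 := by
    have : (1:ℝ) < z ^ (n+1) := one_lt_pow₀ hz1 (by omega)
    linarith
  have hscal : (1 - (z ^ (n+1))⁻¹)⁻¹ * (SP - A / z ^ n * SP)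
      = z * (z ^ n - A) / (z ^ (n+1) - 1) * SP := by
    have h1 : (1 - (z ^ (n+1))⁻¹) = (z ^ (n+1) - 1) / z ^ (n+1) := by
      field_simp
    rw [h1, inv_div]
    field_simp
    ring
  exact hscal
end

section
/- With the words ξ⁻_{n,k} as above and letters ξ_{n,k,m}⁻, for every k ≥ 0 and every real x > 1, Σ_{m=1}^{2^k} (ξ_{n,k,m}⁻ − (1 − ξ_{n,k,m}⁻)) x^{−m} < 0. Equivalently, Σ_{m=1}^{2^k} (2ξ_{n,k,m}⁻ − 1) x^{−m} < 0, and it satisfies the recursion S_{k+1}(x) = (1 − x^{−2^k}) S_k(x) with S_0(x) = −x^{−1}. -/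
lemma xi_recursion (k : ℕ) (x : ℝ) (hx : 1 < x) :
    (∑ m ∈ Finset.range (2 ^ (k + 1)),
        (2 * (if (xiPrefix (k + 1)).getD m false then (1:ℝ) else 0) - 1) / x ^ (m + 1)) =
      (1 - (x ^ 2 ^ k)⁻¹) *
        ∑ m ∈ Finset.range (2 ^ k),
          (2 * (if (xiPrefix k).getD m false then (1:ℝ) else 0) - 1) / x ^ (m + 1) := by
  have hx0 : (0:ℝ) < x := lt_trans one_pos hx
  have hsplit : 2 ^ (k + 1) = 2 ^ k + 2 ^ k := by ring
  rw [hsplit, Finset.sum_range_add]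
  have h1 : ∀ m ∈ Finset.range (2 ^ k),
      (2 * (if (xiPrefix (k + 1)).getD m false then (1:ℝ) else 0) - 1) / x ^ (m + 1) =
      (2 * (if (xiPrefix k).getD m false then (1:ℝ) else 0) - 1) / x ^ (m + 1) := by
    intro m hm
    rw [Finset.mem_range] at hm
    have : (xiPrefix (k + 1)).getD m false = (xiPrefix k).getD m false := by
      rw [show xiPrefix (k+1) = xiPrefix k ++ (xiPrefix k).map not from rfl,
        List.getD_append _ _ _ _ (by rw [xiPrefix_length]; exact hm)]
    rw [this]
  have h2 : ∀ m ∈ Finset.range (2 ^ k),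
      (2 * (if (xiPrefix (k + 1)).getD (2 ^ k + m) false then (1:ℝ) else 0) - 1)
        / x ^ (2 ^ k + m + 1) =
      -((x ^ 2 ^ k)⁻¹ *
        ((2 * (if (xiPrefix k).getD m false then (1:ℝ) else 0) - 1) / x ^ (m + 1))) := by
    intro m hm
    rw [Finset.mem_range] at hm
    have hget : (xiPrefix (k + 1)).getD (2 ^ k + m) false
        = !((xiPrefix k).getD m false) := by
      rw [show xiPrefix (k+1) = xiPrefix k ++ (xiPrefix k).map not from rfl]
      rw [List.getD_eq_getElem?_getD, List.getElem?_append_right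
        (by rw [xiPrefix_length]; omega)]
      rw [xiPrefix_length, Nat.add_sub_cancel_left]
      rw [List.getElem?_map]
      have hlt : m < (xiPrefix k).length := by rw [xiPrefix_length]; exact hm
      rw [List.getElem?_eq_getElem hlt]
      simp [List.getD_eq_getElem?_getD, List.getElem?_eq_getElem hlt]
    rw [hget]
    have hpow : x ^ (2 ^ k + m + 1) = x ^ (2 ^ k) * x ^ (m + 1) := by
      rw [← pow_add]; ring_nf
    rw [hpow]
    rcases (xiPrefix k).getD m false with _ | _ <;>
      · simp only [Bool.not_false, Bool.not_true, Bool.false_eq_true, if_true, if_false]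
        field_simp
        ring
  rw [Finset.sum_congr rfl h1, Finset.sum_congr rfl h2, Finset.sum_neg_distrib,
    ← Finset.mul_sum]
  ring

theorem xi_prefix_sum_neg (n k : ℕ) (hn : 2 ≤ n) (x : ℝ) (hx : 1 < x) :
    (∑ m ∈ Finset.range (2 ^ k),
        (2 * (if (xiPrefix k).getD m false then (1:ℝ) else 0) - 1) / x ^ (m + 1)) < 0 ∧
    (∑ m ∈ Finset.range (2 ^ 0),
        (2 * (if (xiPrefix 0).getD m false then (1:ℝ) else 0) - 1) / x ^ (m + 1)) = -x⁻¹ ∧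
    (∑ m ∈ Finset.range (2 ^ (k + 1)),
        (2 * (if (xiPrefix (k + 1)).getD m false then (1:ℝ) else 0) - 1) / x ^ (m + 1)) =
      (1 - (x ^ 2 ^ k)⁻¹) *
        ∑ m ∈ Finset.range (2 ^ k),
          (2 * (if (xiPrefix k).getD m false then (1:ℝ) else 0) - 1) / x ^ (m + 1) := by
  have hx0 : (0:ℝ) < x := lt_trans one_pos hx
  have hbase : (∑ m ∈ Finset.range (2 ^ 0),
      (2 * (if (xiPrefix 0).getD m false then (1:ℝ) else 0) - 1) / x ^ (m + 1)) = -x⁻¹ := by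
    simp [xiPrefix, neg_div, one_div]
  refine ⟨?_, hbase, xi_recursion k x hx⟩
  induction k with
  | zero => rw [hbase]; simp [inv_pos.mpr hx0]
  | succ k ih =>
    rw [xi_recursion k x hx]
    have hfac : 0 < 1 - (x ^ 2 ^ k)⁻¹ := by
      have : (1:ℝ) < x ^ 2 ^ k := one_lt_pow₀ hx (by positivity)
      have : (x ^ 2 ^ k)⁻¹ < 1 := inv_lt_one_of_one_lt₀ this
      linarith
    exact mul_neg_of_pos_of_neg hfac ih
end

section
/- Let n ≥ 2, β = γ_n the multinacci number of order n, and α = 1 − β/2. Let ω⁻ be the periodic word with period block (0, 1^n) (one 0 followed by n ones). Then α/(1−β) + Σ_{k=1}^∞ ω⁻_k β^{−k} = 1/2. -/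
theorem projection_xi_minus_base (n : ℕ) (hn : 2 ≤ n) (β : ℝ)
    (hβ : β ∈ Set.Ioo (1:ℝ) 2) (hβeq : β ^ n = ∑ j ∈ Finset.range n, β ^ j) :
    (1 - β / 2) / (1 - β) +
      (∑' j : ℕ, (if j % (n + 1) = 0 then (0:ℝ) else 1) / β ^ (j + 1)) = 1 / 2 := by
  obtain ⟨hβ1, hβ2⟩ := hβ
  have hβ0 : (0:ℝ) < β := by linarith
  have hb0 : (0:ℝ) < β⁻¹ := by positivity
  have hb1 : β⁻¹ < 1 := by
    rw [inv_lt_one_iff₀]; right; exact hβ1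
  -- key polynomial relation
  have hkey : β ^ n * (β - 1) = β ^ n - 1 := by
    have := geom_sum_mul β n
    rw [← hβeq] at this
    linarith [this]
  have hkey2 : β ^ (n + 1) = 2 * β ^ n - 1 := by
    have : β ^ (n+1) = β ^ n * β := by ring
    nlinarith [hkey]
  -- summability
  have hgeom : Summable (fun j : ℕ => (β⁻¹) ^ (j + 1)) := by
    exact (summable_geometric_of_lt_one hb0.le hb1).comp_injective (add_left_injective 1)
  have hsub : Summable (fun j : ℕ => if j % (n + 1) = 0 then (β⁻¹) ^ (j + 1) else 0) := by
    apply Summable.of_nonneg_of_le _ _ hgeom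
    · intro j; positivity
    · intro j
      by_cases h : j % (n+1) = 0 <;> simp [h] <;> positivity
  -- rewrite summand
  have hre : (fun j : ℕ => (if j % (n + 1) = 0 then (0:ℝ) else 1) / β ^ (j + 1))
      = fun j => (β⁻¹) ^ (j + 1) - (if j % (n + 1) = 0 then (β⁻¹) ^ (j + 1) else 0) := by
    funext j
    by_cases h : j % (n+1) = 0 <;> simp [h, inv_pow, div_eq_mul_inv]
  rw [hre, Summable.tsum_sub hgeom hsub]
  -- compute the two sums
  have hS1 : (∑' j : ℕ, (β⁻¹) ^ (j + 1)) = β⁻¹ / (1 - β⁻¹) := by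
    have := tsum_geometric_of_lt_one hb0.le hb1
    calc (∑' j : ℕ, (β⁻¹) ^ (j + 1)) = ∑' j : ℕ, β⁻¹ * (β⁻¹) ^ j := by
          congr 1; funext j; ring
      _ = β⁻¹ * (1 - β⁻¹)⁻¹ := by rw [tsum_mul_left, this]
      _ = β⁻¹ / (1 - β⁻¹) := by rw [div_eq_mul_inv]
  have hbn1 : (β⁻¹) ^ (n + 1) < 1 := by
    apply pow_lt_one₀ hb0.le hb1; omega
  have hbn0 : (0:ℝ) ≤ (β⁻¹) ^ (n + 1) := by positivity
  have hS2 : (∑' j : ℕ, (if j % (n + 1) = 0 then (β⁻¹) ^ (j + 1) else 0))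
      = β⁻¹ / (1 - (β⁻¹) ^ (n + 1)) := by
    have hinj : Function.Injective (fun k : ℕ => (n + 1) * k) := by
      intro a b h; simpa using h
    have hrange : Function.support (fun j : ℕ =>
        (if j % (n + 1) = 0 then (β⁻¹) ^ (j + 1) else (0:ℝ)))
        ⊆ Set.range (fun k : ℕ => (n + 1) * k) := by
      intro j hj
      by_cases h : j % (n + 1) = 0
      · exact ⟨j / (n+1), Nat.mul_div_cancel' (Nat.dvd_of_mod_eq_zero h)⟩
      · simp [Function.mem_support, h] at hj
    rw [← hinj.tsum_eq hrange]
    have : (fun k : ℕ => if ((n + 1) * k) % (n + 1) = 0 then (β⁻¹) ^ ((n + 1) * k + 1) else (0:ℝ))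
        = fun k : ℕ => β⁻¹ * ((β⁻¹) ^ (n + 1)) ^ k := by
      funext k
      rw [if_pos (Nat.mul_mod_right _ _)]
      rw [← pow_mul]; ring
    rw [show (∑' k : ℕ, (fun j : ℕ => if j % (n + 1) = 0 then (β⁻¹) ^ (j + 1) else (0:ℝ)) ((n+1)*k)) = ∑' k : ℕ, β⁻¹ * ((β⁻¹) ^ (n + 1)) ^ k from by rw [← this]]
    rw [tsum_mul_left, tsum_geometric_of_lt_one hbn0 hbn1, div_eq_mul_inv]
  rw [hS1, hS2]
  -- final algebra
  have h1 : β - 1 ≠ 0 := by linarith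
  have h2 : (1:ℝ) - β ≠ 0 := by linarith
  have h3 : β ≠ 0 := ne_of_gt hβ0
  have h4 : 1 - β⁻¹ ≠ 0 := by
    intro h; apply h3; field_simp at h; linarith
  have hpow : β ^ (n+1) ≠ 0 := pow_ne_zero _ h3
  have h5 : 1 - (β⁻¹) ^ (n + 1) ≠ 0 := by
    intro h
    have : (β⁻¹) ^ (n+1) = 1 := by linarith
    linarith [hbn1, this]
  have hpn0 : (β:ℝ) ^ n ≠ 0 := pow_ne_zero _ h3
  have hpn1 : (1:ℝ) < β ^ n := one_lt_pow₀ hβ1 (by omega)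
  have hS1' : β⁻¹ / (1 - β⁻¹) = 1 / (β - 1) := by
    rw [div_eq_div_iff (by exact fun h => h4 (by linarith)) h1]
    field_simp
  have hden : (1:ℝ) - (β⁻¹) ^ (n + 1) = 2 * β ^ n * (β - 1) / β ^ (n+1) := by
    rw [inv_pow, eq_div_iff hpow]
    have : β ^ (n+1) - 1 = 2 * β ^ n * (β - 1) := by
      rw [hkey2]; nlinarith [hkey]
    field_simp
    linarith [this]
  rw [hS1', hden]
  have hd2 : 2 * β ^ n * (β - 1) / β ^ (n+1) ≠ 0 := by
    rw [hden] at h5; exact h5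
  have hsimp : β⁻¹ * β ^ (n+1) = β ^ n := by
    rw [pow_succ]; field_simp
  rw [div_div_eq_mul_div, hsimp]
  field_simp
  ring
end

section
/- Let n ≥ 2, k ≥ 1 be integers, β = β_{n,k} the positive real with β^{2^k} = γ_n, and α = 1 − β/2. Suppose the projections satisfy π_{β², 1−β²/2}(ξ⁻_{n,k−1}) = π_{β², 1−β²/2}(ξ⁺_{n,k−1}) = 1/2 (inductive hypothesis). Then π_{β,α}(ξ⁻_{n,k}) = π_{β,α}(ξ⁺_{n,k}) = 1/2, using the substitution identity κ̃(ξ^±_{n,k−1}) = ξ^±_{n,k} where κ̃: 0↦01, 1↦10, and the projection identity π_{β,α}(κ̃(ω)) = β·π_{β²,1−β²/2}(ω) + π_{β²,1−β²/2}(*(ω)) − (β+1)(1−β²/2)/(1−β²) + (1−β/2)/(1−β). -/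
/-- The projection `π_{β,α}(ω) = α/(1-β) + Σ_{m≥1} ω_m β^{-m}`. -/
noncomputable def piProj (β α : ℝ) (ω : ℕ → Bool) : ℝ :=
  α / (1 - β) + ∑' m : ℕ, (if ω m then (1:ℝ) else 0) / β ^ (m + 1)

namespace ProjAux

def κ (b : Bool) : List Bool := [b, !b]

lemma flatMap_map_not (l : List Bool) : (l.map not).flatMap κ = (l.flatMap κ).map not := by
  induction l with
  | nil => simp
  | cons b t ih => simp [κ, ih]

lemma xiPrefix_succ (k : ℕ) : xiPrefix (k+1) = (xiPrefix k).flatMap κ := by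
  induction k with
  | zero => rfl
  | succ k ih =>
    show xiPrefix (k+1) ++ (xiPrefix (k+1)).map not = (xiPrefix (k+1)).flatMap κ
    conv_rhs => rw [xiPrefix]
    rw [List.flatMap_append, flatMap_map_not, ← ih]

lemma flatten_replicate_flatMap (n : ℕ) (l : List Bool) :
    ((List.replicate n l).flatten).flatMap κ = (List.replicate n (l.flatMap κ)).flatten := by
  induction n with
  | zero => simp
  | succ n ih => simp [List.replicate_succ, ih]

lemma xiBlock_succ (n k : ℕ) : xiBlock n (k+1) = (xiBlock n k).flatMap κ := by
  unfold xiBlock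
  rw [List.flatMap_append, flatten_replicate_flatMap, flatMap_map_not, xiPrefix_succ]

lemma length_xiPrefix (k : ℕ) : (xiPrefix k).length = 2^k := by
  induction k with
  | zero => rfl
  | succ k ih => simp [xiPrefix, ih]; ring

lemma length_flatten_replicate (n : ℕ) (l : List Bool) :
    ((List.replicate n l).flatten).length = n * l.length := by
  induction n with
  | zero => simp
  | succ n ih => simp [List.replicate_succ, ih]; ring

lemma length_xiBlock (n k : ℕ) : (xiBlock n k).length = (n+1) * 2^k := by
  simp [xiBlock, length_flatten_replicate, length_xiPrefix]; ring

lemma getD_flatMap (L : List Bool) (i : ℕ) (h : i < L.length) :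
    (L.flatMap κ).getD (2*i) false = L.getD i false ∧
    (L.flatMap κ).getD (2*i+1) false = !L.getD i false := by
  induction L generalizing i with
  | nil => simp at h
  | cons b t ih =>
    cases i with
    | zero => simp [κ]
    | succ i =>
      have h' : i < t.length := by simpa using h
      have hrec := ih i h'
      have e1 : 2*(i+1) = (2*i)+1+1 := by ring
      rw [e1]
      simpa [κ] using hrec

lemma xiLetter_even (n k j : ℕ) : xiLetterNeg n (k+1) (2*j) = xiLetterNeg n k j := by
  have hP : 0 < (n+1) * 2^k := by positivity
  have hmod : j % ((n+1)*2^k) < (n+1)*2^k := Nat.mod_lt _ hP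
  have hlen : j % ((n+1)*2^k) < (xiBlock n k).length := by rw [length_xiBlock]; exact hmod
  unfold xiLetterNeg
  rw [xiBlock_succ]
  have h2 : (n+1)*2^(k+1) = 2*((n+1)*2^k) := by ring
  rw [h2, Nat.mul_mod_mul_left]
  exact (getD_flatMap _ _ hlen).1

lemma xiLetter_odd (n k j : ℕ) : xiLetterNeg n (k+1) (2*j+1) = !xiLetterNeg n k j := by
  have hP : 0 < (n+1) * 2^k := by positivity
  have hmod : j % ((n+1)*2^k) < (n+1)*2^k := Nat.mod_lt _ hP
  have hlen : j % ((n+1)*2^k) < (xiBlock n k).length := by rw [length_xiBlock]; exact hmod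
  unfold xiLetterNeg
  rw [xiBlock_succ]
  have h2 : (n+1)*2^(k+1) = 2*((n+1)*2^k) := by ring
  set p := (n+1)*2^k with hp
  have hkey : (2*j+1) % (2*p) = 2*(j%p)+1 := by
    conv_lhs => rw [← Nat.div_add_mod j p]
    rw [show 2*(p*(j/p)+j%p)+1 = (2*(j%p)+1) + (j/p)*(2*p) by ring,
      Nat.add_mul_mod_self_right, Nat.mod_eq_of_lt (by omega)]
  rw [h2, hkey]
  exact (getD_flatMap _ _ hlen).2

lemma summable_term (β : ℝ) (hβ : 1 < β) (ω : ℕ → Bool) :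
    Summable (fun m : ℕ => (if ω m then (1:ℝ) else 0) / β ^ (m+1)) := by
  have hb0 : 0 < β := lt_trans one_pos hβ
  have hgeo : Summable (fun m : ℕ => (β⁻¹) ^ (m+1)) := by
    have h1 : (0:ℝ) ≤ β⁻¹ := by positivity
    have h2 : β⁻¹ < 1 := inv_lt_one_of_one_lt₀ hβ
    simpa [pow_succ] using (summable_geometric_of_lt_one h1 h2).mul_right β⁻¹
  apply Summable.of_nonneg_of_le (fun m => by positivity) (fun m => ?_) hgeo
  rw [inv_pow]
  rw [show (β ^ (m+1))⁻¹ = 1 / β ^ (m+1) by rw [one_div]]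
  gcongr
  split <;> norm_num

lemma key (β : ℝ) (hβ : 1 < β) (ω ω' : ℕ → Bool)
    (he : ∀ j, ω' (2*j) = ω j) (ho : ∀ j, ω' (2*j+1) = !ω j)
    (h1 : piProj (β^2) (1 - β^2/2) ω = 1/2)
    (h2 : piProj (β^2) (1 - β^2/2) (fun m => !ω m) = 1/2) :
    piProj β (1 - β/2) ω' = 1/2 := by
  have hb0 : 0 < β := lt_trans one_pos hβ
  have hb2 : 1 < β^2 := by nlinarith
  have hne : (1:ℝ) - β ≠ 0 := by intro h; nlinarith
  have hne2 : (1:ℝ) - β^2 ≠ 0 := by intro h; nlinarith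
  have hg1 : Summable (fun j : ℕ => (if ω j then (1:ℝ) else 0) / (β^2)^(j+1)) :=
    summable_term _ hb2 ω
  have hg2 : Summable (fun j : ℕ => (if !ω j then (1:ℝ) else 0) / (β^2)^(j+1)) :=
    summable_term _ hb2 _
  have he' : (fun j : ℕ => (if ω' (2*j) then (1:ℝ) else 0) / β ^ (2*j+1))
      = fun j => β * ((if ω j then (1:ℝ) else 0) / (β^2)^(j+1)) := by
    funext j
    rw [he]
    rw [show ((β^2)^(j+1) : ℝ) = β^(2*j+1) * β by ring]
    have : (β:ℝ)^(2*j+1) ≠ 0 := by positivity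
    field_simp
  have ho' : (fun j : ℕ => (if ω' (2*j+1) then (1:ℝ) else 0) / β ^ (2*j+1+1))
      = fun j => (if !ω j then (1:ℝ) else 0) / (β^2)^(j+1) := by
    funext j
    rw [ho]
    congr 1
    ring
  have hse : Summable (fun j : ℕ => (if ω' (2*j) then (1:ℝ) else 0) / β ^ (2*j+1)) := by
    rw [he']; exact hg1.mul_left β
  have hso : Summable (fun j : ℕ => (if ω' (2*j+1) then (1:ℝ) else 0) / β ^ (2*j+1+1)) := by
    rw [ho']; exact hg2
  have h1' : (1-β^2/2)/(1-β^2) + ∑' j : ℕ, (if ω j then (1:ℝ) else 0) / (β^2)^(j+1) = 1/2 := h1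
  have h2' : (1-β^2/2)/(1-β^2) + ∑' j : ℕ, (if !ω j then (1:ℝ) else 0) / (β^2)^(j+1) = 1/2 := h2
  have T1 : ∑' j : ℕ, (if ω j then (1:ℝ) else 0) / (β^2)^(j+1)
      = 1/2 - (1-β^2/2)/(1-β^2) := by linarith
  have T2 : ∑' j : ℕ, (if !ω j then (1:ℝ) else 0) / (β^2)^(j+1)
      = 1/2 - (1-β^2/2)/(1-β^2) := by linarith
  have e1 : ∑' j : ℕ, (if ω' (2*j) then (1:ℝ) else 0) / β ^ (2*j+1)
      = β * (1/2 - (1-β^2/2)/(1-β^2)) := by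
    rw [he', tsum_mul_left, T1]
  have e2 : ∑' j : ℕ, (if ω' (2*j+1) then (1:ℝ) else 0) / β ^ (2*j+1+1)
      = 1/2 - (1-β^2/2)/(1-β^2) := by
    rw [ho', T2]
  have hsum : (∑' j : ℕ, (if ω' (2*j) then (1:ℝ) else 0) / β ^ (2*j+1))
      + (∑' j : ℕ, (if ω' (2*j+1) then (1:ℝ) else 0) / β ^ (2*j+1+1))
      = ∑' m : ℕ, (if ω' m then (1:ℝ) else 0) / β ^ (m+1) :=
    tsum_even_add_odd (f := fun m => (if ω' m then (1:ℝ) else 0) / β ^ (m+1)) hse hso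
  rw [e1, e2] at hsum
  show (1 - β/2)/(1-β) + ∑' m : ℕ, (if ω' m then (1:ℝ) else 0) / β ^ (m+1) = 1/2
  rw [← hsum]
  field_simp
  ring

end ProjAux

theorem projection_xi_inductive_step (n k : ℕ) (hn : 2 ≤ n) (hk : 1 ≤ k) (γ β : ℝ)
    (hγ : γ ∈ Set.Ioo (1:ℝ) 2) (hγeq : γ ^ n = ∑ j ∈ Finset.range n, γ ^ j)
    (hβ : 0 < β) (hβγ : β ^ 2 ^ k = γ)
    (hindNeg : piProj (β ^ 2) (1 - β ^ 2 / 2) (xiLetterNeg n (k - 1)) = 1 / 2)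
    (hindPos : piProj (β ^ 2) (1 - β ^ 2 / 2) (fun m => ! xiLetterNeg n (k - 1) m) = 1 / 2) :
    piProj β (1 - β / 2) (xiLetterNeg n k) = 1 / 2 ∧
      piProj β (1 - β / 2) (fun m => ! xiLetterNeg n k m) = 1 / 2 := by
  obtain ⟨k', rfl⟩ : ∃ k', k = k' + 1 := ⟨k - 1, by omega⟩
  have hk1 : k' + 1 - 1 = k' := rfl
  rw [hk1] at hindNeg hindPos
  have hβ1 : 1 < β := by
    by_contra h
    push_neg at h
    have h1 : β ^ 2 ^ (k'+1) ≤ 1 := pow_le_one₀ hβ.le h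
    rw [hβγ] at h1
    linarith [hγ.1]
  constructor
  · exact ProjAux.key β hβ1 (xiLetterNeg n k') (xiLetterNeg n (k'+1))
      (fun j => ProjAux.xiLetter_even n k' j) (fun j => ProjAux.xiLetter_odd n k' j)
      hindNeg hindPos
  · apply ProjAux.key β hβ1 (fun m => !xiLetterNeg n k' m) (fun m => !xiLetterNeg n (k'+1) m)
      (fun j => by simp only [ProjAux.xiLetter_even]) (fun j => by simp only [ProjAux.xiLetter_odd])
      hindPos
    have hd : (fun m => !!xiLetterNeg n k' m) = xiLetterNeg n k' := by
      funext m; simp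
    rw [hd]
    exact hindNeg
end
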